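/- arXiv:1605.06631 — 2 statements merged into one kernel-verified Lean document; each statement's English description precedes it below -/
import Mathlib

section
/- For every positive integer k, the normalized Eisenstein series E_{2k} satisfies, as an identity of q-series with q replaced by −q corresponding to τ ↦ τ + 1/2: E_{2k}(τ + 1/2) = −E_{2k}(τ) + (2^{2k} + 2)·E_{2k}(2τ) − 2^{2k}·E_{2k}(4τ). Equivalently, writing E_{2k} as the q-series 1 − (4k/B_{2k})·∑_{n≥1} σ_{2k−1}(n) q^n, one has the formal power series identity E(−q) = −E(q) + (2^{2k}+2)·E(q²) − 2^{2k}·E(q⁴). -/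
noncomputable section

namespace Stmt10

open Finset

def S (s n : ℕ) : ℚ := ∑ d ∈ n.divisors, (d : ℚ) ^ s
def O (s n : ℕ) : ℚ := ∑ d ∈ n.divisors.filter (fun d => ¬ 2 ∣ d), (d : ℚ) ^ s

lemma odd_filter (s m : ℕ) (hm : m ≠ 0) : O s (2 * m) = O s m := by
  unfold O
  congr 1
  ext d
  simp only [mem_filter, Nat.mem_divisors]
  constructor
  · rintro ⟨⟨hd, _⟩, hodd⟩
    refine ⟨⟨?_, hm⟩, hodd⟩
    have hcop : Nat.Coprime d 2 := by
      rw [Nat.coprime_two_right, Nat.odd_iff]; omega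
    exact hcop.dvd_of_dvd_mul_left hd
  · rintro ⟨⟨hd, _⟩, hodd⟩
    exact ⟨⟨hd.mul_left 2, by positivity⟩, hodd⟩

lemma even_filter (s m : ℕ) (hm : m ≠ 0) :
    ∑ d ∈ (2 * m).divisors.filter (fun d => 2 ∣ d), (d : ℚ) ^ s = 2 ^ s * S s m := by
  have himg : (2 * m).divisors.filter (fun d => 2 ∣ d) = m.divisors.image (fun d => 2 * d) := by
    ext d
    simp only [mem_filter, Nat.mem_divisors, mem_image]
    constructor
    · rintro ⟨⟨hd, _⟩, e, rfl⟩
      exact ⟨e, ⟨(mul_dvd_mul_iff_left (two_ne_zero)).mp hd, hm⟩, rfl⟩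
    · rintro ⟨e, ⟨he, _⟩, rfl⟩
      exact ⟨⟨mul_dvd_mul_left 2 he, by positivity⟩, ⟨e, rfl⟩⟩
  rw [himg, Finset.sum_image (fun a _ b _ h => by omega)]
  rw [S, Finset.mul_sum]
  congr 1; ext d; push_cast; ring

lemma split (s m : ℕ) (hm : m ≠ 0) : S s (2 * m) = O s m + 2 ^ s * S s m := by
  rw [S, ← Finset.sum_filter_add_sum_filter_not ((2*m).divisors) (fun d => 2 ∣ d),
    even_filter s m hm]
  rw [show (∑ d ∈ (2*m).divisors.filter (fun d => ¬ 2 ∣ d), (d : ℚ) ^ s) = O s (2*m) from rfl,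
    odd_filter s m hm]
  ring

lemma O_eq_S_of_odd (s m : ℕ) (hm : ¬ 2 ∣ m) : O s m = S s m := by
  unfold O S
  rw [Finset.filter_true_of_mem]
  intro d hd h2
  exact hm (h2.trans (Nat.mem_divisors.mp hd).1)

lemma key (s m : ℕ) (hm : m ≠ 0) :
    2 * S s (2 * m) = (2 ^ (s+1) + 2) * S s m
      - 2 ^ (s+1) * (if 2 ∣ m then S s (m / 2) else 0) := by
  by_cases h : 2 ∣ m
  · obtain ⟨m', rfl⟩ := h
    have hm' : m' ≠ 0 := by simpa using hm
    rw [if_pos ⟨m', rfl⟩, Nat.mul_div_cancel_left _ two_pos,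
      split s (2 * m') hm, split s m' hm', odd_filter s m' hm']
    ring
  · rw [if_neg h, split s m hm, O_eq_S_of_odd s m h]
    ring

end Stmt10

/-- `substPow m f` is the power series `f(X^m)`. -/
def substPow (m : ℕ) (f : PowerSeries ℚ) : PowerSeries ℚ :=
  PowerSeries.mk fun n => if m ∣ n then PowerSeries.coeff (n / m) f else 0

theorem statement10 (k : ℕ) (hk : 0 < k) (E : PowerSeries ℚ)
    (hE : E = PowerSeries.mk fun n =>
      if n = 0 then 1
      else -((4 * k : ℚ) / bernoulli (2 * k)) * ∑ d ∈ n.divisors, (d : ℚ) ^ (2 * k - 1)) :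
    PowerSeries.rescale (-1 : ℚ) E =
      -E + ((2 : ℚ) ^ (2 * k) + 2) • substPow 2 E - (2 : ℚ) ^ (2 * k) • substPow 4 E := by
  have hs : 2 * k - 1 + 1 = 2 * k := by omega
  set c : ℚ := -((4 * k : ℚ) / bernoulli (2 * k)) with hc
  ext n
  rw [PowerSeries.coeff_rescale]
  simp only [map_sub, map_add, map_neg, map_smul, smul_eq_mul, substPow,
    PowerSeries.coeff_mk, hE]
  rcases Nat.eq_zero_or_pos n with rfl | hn
  · norm_num
    ring
  by_cases h2 : 2 ∣ n
  · obtain ⟨m, rfl⟩ := h2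
    have hm : m ≠ 0 := by omega
    have hkey := Stmt10.key (2 * k - 1) m hm
    rw [hs] at hkey
    simp only [Stmt10.S] at hkey
    have hne : 2 * m ≠ 0 := by omega
    have hpow : ((-1 : ℚ)) ^ (2 * m) = 1 := Even.neg_one_pow (even_two_mul m)
    by_cases h2m : 2 ∣ m
    · have h4 : 4 ∣ 2 * m := by omega
      have hq : 2 * m / 4 = m / 2 := by omega
      have hq2 : m / 2 ≠ 0 := by omega
      rw [if_pos h2m] at hkey
      simp only [if_pos h4, hq, if_pos (dvd_mul_right 2 m),
        Nat.mul_div_cancel_left m two_pos, if_neg hne, if_neg hm, if_neg hq2, hpow]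
      linear_combination c * hkey
    · have h4 : ¬ 4 ∣ 2 * m := by omega
      rw [if_neg h2m] at hkey
      simp only [if_neg h4, if_pos (dvd_mul_right 2 m),
        Nat.mul_div_cancel_left m two_pos, if_neg hne, if_neg hm, hpow]
      linear_combination c * hkey
  · have h4 : ¬ 4 ∣ n := by omega
    have hne : n ≠ 0 := by omega
    have hpow : ((-1 : ℚ)) ^ n = -1 := Odd.neg_one_pow (Nat.odd_iff.mpr (by omega))
    simp only [if_neg h2, if_neg h4, if_neg hne, hpow]
    ring
end
end

section
/- Let p ∈ {7, 23} and k ≥ 0, and let E^∞(q) = 1 − c·∑_{n≥1} (∑_{d|n} χ_p(d) d^{2k}) q^n where c = (4k+2)/B_{2k+1,p}. Then as formal power series, E^∞(−q) = −E^∞(q) + (2^{2k+1} + 2)·E^∞(q²) − 2^{2k+1}·E^∞(q⁴). -/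
noncomputable section

instance : Fact (Nat.Prime 7) := ⟨by norm_num⟩

instance : Fact (Nat.Prime 23) := ⟨by norm_num⟩

/-- The generalized Bernoulli number `B_{k,χ_p}` attached to the Legendre symbol mod `p`,
via the classical formula `B_{k,χ} = f^{k-1} ∑_{j<f} χ(j) B_k(j/f)`. -/
def genBernoulli (p : ℕ) [Fact p.Prime] (k : ℕ) : ℚ :=
  (p : ℚ) ^ (k - 1) *
    ∑ j ∈ Finset.range p, (legendreSym p (j : ℤ) : ℚ) * (Polynomial.bernoulli k).eval ((j : ℚ) / p)

open Finset

lemma leg7 : legendreSym 7 2 = 1 := by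
  rw [legendreSym.eq_one_iff]
  · exact ⟨3, by decide⟩
  · decide

lemma leg23 : legendreSym 23 2 = 1 := by
  rw [legendreSym.eq_one_iff]
  · exact ⟨5, by decide⟩
  · decide

lemma evenFilter (m : ℕ) (hm : m ≠ 0) :
    (2*m).divisors.filter (fun d => 2 ∣ d) = m.divisors.image (fun d => 2*d) := by
  ext d
  simp only [mem_filter, Nat.mem_divisors, mem_image, mul_ne_zero_iff, and_true,
    Nat.mem_divisors, two_ne_zero, hm, Ne, not_false_iff]
  constructor
  · rintro ⟨hdvd, e, rfl⟩
    exact ⟨e, (mul_dvd_mul_iff_left (two_ne_zero (α := ℕ))).1 hdvd, rfl⟩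
  · rintro ⟨e, he, rfl⟩
    exact ⟨mul_dvd_mul_left 2 he, e, rfl⟩

lemma oddFilter (m : ℕ) (hm : m ≠ 0) (f : ℕ → ℚ) :
    ∑ d ∈ (2*m).divisors.filter (fun d => ¬ 2 ∣ d), f d
      = ∑ d ∈ m.divisors.filter (fun d => ¬ 2 ∣ d), f d := by
  apply Finset.sum_congr _ fun _ _ => rfl
  ext d
  simp only [mem_filter, Nat.mem_divisors, mul_ne_zero_iff, and_true, hm, Ne,
    not_false_iff, two_ne_zero]
  constructor
  · rintro ⟨hdvd, hodd⟩
    refine ⟨Nat.Coprime.dvd_of_dvd_mul_left ?_ hdvd, hodd⟩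
    simpa [Nat.coprime_two_right, Nat.odd_iff, Nat.two_dvd_ne_zero] using hodd
  · rintro ⟨hdvd, hodd⟩
    exact ⟨hdvd.mul_left 2, hodd⟩

lemma sigma_two (f : ℕ → ℚ) (t : ℚ) (hf : ∀ d, f (2*d) = t * f d) (m : ℕ) (hm : m ≠ 0) :
    ∑ d ∈ (2*m).divisors, f d
      = (∑ d ∈ m.divisors.filter (fun d => ¬ 2 ∣ d), f d) + t * ∑ d ∈ m.divisors, f d := by
  rw [← Finset.sum_filter_add_sum_filter_not (2*m).divisors (fun d => 2 ∣ d), add_comm,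
    oddFilter m hm, evenFilter m hm, Finset.sum_image (fun a _ b _ h => by omega)]
  simp [hf, Finset.mul_sum]

lemma oddAll (m : ℕ) (hodd : ¬ 2 ∣ m) (f : ℕ → ℚ) :
    ∑ d ∈ m.divisors.filter (fun d => ¬ 2 ∣ d), f d = ∑ d ∈ m.divisors, f d := by
  apply Finset.sum_congr _ fun _ _ => rfl
  apply Finset.filter_true_of_mem
  intro d hd
  exact fun h2 => hodd (h2.trans (Nat.mem_divisors.1 hd).1)

theorem statement12 (p : ℕ) [Fact p.Prime] (hp : p = 7 ∨ p = 23) (k : ℕ)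
    (c : ℚ) (hc : c = (4 * k + 2 : ℚ) / genBernoulli p (2 * k + 1))
    (E : PowerSeries ℚ)
    (hE : E = PowerSeries.mk fun n =>
      if n = 0 then 1
      else -c * ∑ d ∈ n.divisors, (legendreSym p (d : ℤ) : ℚ) * (d : ℚ) ^ (2 * k)) :
    PowerSeries.rescale (-1 : ℚ) E =
      -E + ((2 : ℚ) ^ (2 * k + 1) + 2) • substPow 2 E - (2 : ℚ) ^ (2 * k + 1) • substPow 4 E := by
  have h2 : legendreSym p 2 = 1 := by
    rcases hp with rfl | rfl
    · exact leg7
    · exact leg23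
  set f : ℕ → ℚ := fun d => (legendreSym p (d : ℤ) : ℚ) * (d : ℚ) ^ (2 * k) with hfdef
  have hf : ∀ d, f (2*d) = (2:ℚ)^(2*k) * f d := by
    intro d
    simp only [hfdef, Nat.cast_mul, Nat.cast_ofNat]
    rw [legendreSym.mul, h2]
    push_cast
    ring
  subst hE
  ext n
  simp only [map_add, map_sub, map_neg, PowerSeries.coeff_rescale, PowerSeries.coeff_smul,
    substPow, PowerSeries.coeff_mk, smul_eq_mul]
  rcases eq_or_ne n 0 with rfl | hn
  · norm_num; ring
  · rcases Nat.even_or_odd n with ⟨m, rfl⟩ | hodd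
    · have hm : m ≠ 0 := by omega
      rw [show m + m = 2*m by ring]
      have h2n : 2 ∣ 2*m := ⟨m, rfl⟩
      have hdiv2 : 2*m/2 = m := by omega
      rw [if_neg (by omega : ¬ 2*m = 0), if_pos h2n, hdiv2, if_neg (by omega : ¬ m = 0)]
      have hneg : (-1:ℚ)^(2*m) = 1 := by
        rw [pow_mul]; norm_num
      rw [hneg]
      rcases Nat.even_or_odd m with ⟨r, rfl⟩ | hmodd
      · have hr : r ≠ 0 := by omega
        rw [show r + r = 2*r by ring] at *
        have h4 : (4:ℕ) ∣ 2*(2*r) := ⟨r, by ring⟩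
        rw [if_pos h4, show 2*(2*r)/4 = r by omega, if_neg hr]
        have h1 := sigma_two f ((2:ℚ)^(2*k)) hf (2*r) (by omega)
        have hsig2 := sigma_two f ((2:ℚ)^(2*k)) hf r hr
        have hO := oddFilter r hr f
        linear_combination (-2*c) * h1 + (2*c) * hsig2 + (-2*c) * hO
      · rw [if_neg (by have := Nat.odd_iff.1 hmodd; omega : ¬ 4 ∣ 2*m)]
        have h1 := sigma_two f ((2:ℚ)^(2*k)) hf m hm
        have hO := oddAll m (by rw [Nat.two_dvd_ne_zero]; exact Nat.odd_iff.1 hmodd) f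
        linear_combination (-2*c) * h1 + (-2*c) * hO
    · have hn2 : ¬ (2:ℕ) ∣ n := by
        rw [Nat.two_dvd_ne_zero]; exact Nat.odd_iff.1 hodd
      rw [if_neg hn2, if_neg (fun h4 => hn2 (dvd_trans (by norm_num : (2:ℕ) ∣ 4) h4)), hodd.neg_one_pow,
        if_neg hn]
      ring
end
end
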